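/- Let V be a real vector space, g a nondegenerate symmetric bilinear form on V, κ ≠ 0 a real number, w ∈ V with g(w,w) = 2κ, and Y : V → V a g-antisymmetric linear map. Define 𝔤(u,v) = g(u,v) − (1/(2κ))·g(w,u)·g(w,v) and the antisymmetric bilinear form ω̂ on V × V by ω̂((u₁,v₁),(u₂,v₂)) = 𝔤(v₁,u₂) − 𝔤(u₁,v₂) + g(u₁, Y(u₂)). Then the kernel of ω̂, namely { z ∈ V × V : ω̂(z, z') = 0 for all z' ∈ V × V }, is exactly the two-dimensional subspace spanned by (0, w) and (w, Y(w)). -/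
import Mathlib


/-- **Lemma `lemmakernelomega`.** Let `V` be a real vector space, `g` a nondegenerate
symmetric bilinear form, `κ ≠ 0`, `w ∈ V` with `g(w,w) = 2κ`, and `Y` a `g`-antisymmetric
endomorphism. Define `𝔤(u,v) = g(u,v) − (1/(2κ))·g(w,u)·g(w,v)` and the antisymmetric
form `ω̂((u₁,v₁),(u₂,v₂)) = 𝔤(v₁,u₂) − 𝔤(u₁,v₂) + g(u₁, Y u₂)` on `V × V`. Then the
kernel of `ω̂` is exactly the two-dimensional subspace spanned by `(0, w)` and
`(w, Y w)`. -/
theorem ker_presymplectic_eq_span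
    (V : Type*) [AddCommGroup V] [Module ℝ V]
    (g : LinearMap.BilinForm ℝ V) (hgsymm : ∀ u v : V, g u v = g v u)
    (hgnd : ∀ u : V, (∀ v : V, g u v = 0) → u = 0)
    (κ : ℝ) (hκ : κ ≠ 0) (w : V) (hw : g w w = 2 * κ)
    (Y : V →ₗ[ℝ] V) (hY : ∀ u v : V, g (Y u) v = - g u (Y v)) :
    {z : V × V | ∀ z' : V × V,
        (g z.2 z'.1 - (1 / (2 * κ)) * (g w z.2 * g w z'.1))
          - (g z.1 z'.2 - (1 / (2 * κ)) * (g w z.1 * g w z'.2))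
          + g z.1 (Y z'.1) = 0}
      = (Submodule.span ℝ {((0 : V), w), (w, Y w)} : Set (V × V)) ∧
    Module.finrank ℝ (Submodule.span ℝ {((0 : V), w), (w, Y w)}) = 2 := by
  have hwYw : g w (Y w) = 0 := by
    have h1 := hY w w
    have h2 := hgsymm (Y w) w
    linarith
  have hw0 : w ≠ 0 := by
    intro h
    apply hκ
    have : (0:ℝ) = 2 * κ := by simpa [h] using hw
    linarith
  constructor
  · ext z
    simp only [Set.mem_setOf_eq, SetLike.mem_coe, Submodule.mem_span_pair]
    constructor
    · intro h
      have h1 : ∀ v' : V, g z.1 v' - (1 / (2 * κ)) * (g w z.1 * g w v') = 0 := by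
        intro v'
        have := h (0, v')
        simp only [map_zero, LinearMap.zero_apply, mul_zero, sub_zero] at this
        linarith
      have h2 : ∀ u' : V,
          g z.2 u' - (1 / (2 * κ)) * (g w z.2 * g w u') + g z.1 (Y u') = 0 := by
        intro u'
        have := h (u', 0)
        simp only [map_zero, mul_zero, sub_zero] at this
        linarith
      have hu : z.1 = ((1 / (2 * κ)) * g w z.1) • w := by
        rw [← sub_eq_zero]
        apply hgnd
        intro v'
        simp only [map_sub, map_smul, LinearMap.sub_apply, LinearMap.smul_apply,
          smul_eq_mul]
        have := h1 v'
        linarith [h1 v']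
      have hv : z.2 = ((1 / (2 * κ)) * g w z.2) • w + Y z.1 := by
        rw [← sub_eq_zero, sub_add_eq_sub_sub]
        apply hgnd
        intro u'
        simp only [map_sub, map_smul, LinearMap.sub_apply, LinearMap.smul_apply,
          smul_eq_mul]
        have h3 := h2 u'
        have h4 := hY z.1 u'
        linarith
      refine ⟨(1 / (2 * κ)) * g w z.2, (1 / (2 * κ)) * g w z.1, ?_⟩
      refine Prod.ext ?_ ?_
      · simp only [Prod.fst_add, Prod.smul_fst, smul_zero, zero_add]
        exact hu.symm
      · simp only [Prod.snd_add, Prod.smul_snd]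
        conv_rhs => rw [hv, hu, map_smul]
    · rintro ⟨a, b, hab⟩ z'
      have h1 : z.1 = b • w := by rw [← hab]; simp
      have h2 : z.2 = a • w + b • Y w := by rw [← hab]; simp
      rw [h1, h2]
      have h3 := hY w z'.1
      simp only [map_add, map_smul, LinearMap.add_apply, LinearMap.smul_apply,
        smul_eq_mul, hw, hwYw, h3]
      field_simp
      ring
  · have hli : LinearIndependent ℝ ![((0 : V), w), (w, Y w)] := by
      rw [LinearIndependent.pair_iff]
      intro s t hst
      have h1 : t • w = 0 := by
        have := congrArg Prod.fst hst; simpa using this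
      have ht : t = 0 := by
        rcases smul_eq_zero.mp h1 with h | h
        · exact h
        · exact absurd h hw0
      have h2 : s • w + t • Y w = 0 := by
        have := congrArg Prod.snd hst; simpa using this
      rw [ht, zero_smul, add_zero] at h2
      have hs : s = 0 := by
        rcases smul_eq_zero.mp h2 with h | h
        · exact h
        · exact absurd h hw0
      exact ⟨hs, ht⟩
    have hrange : ({((0 : V), w), (w, Y w)} : Set (V × V))
        = Set.range ![((0 : V), w), (w, Y w)] := by
      simp only [Matrix.range_cons, Matrix.range_empty, Set.union_empty,
        Set.union_singleton]
      exact Set.pair_comm _ _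
    rw [hrange, finrank_span_eq_card hli]
    simp
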